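/- arXiv:1106.4325 — 2 statements merged into one kernel-verified Lean document; each statement's English description precedes it below -/
import Mathlib

section
/- In the r-color model M with r ≥ 3 colors, for any two distinct colors i ≠ j and all n ≥ 0, Cov(X_{n,i}, X_{n,j}) = [C(n−1+λ_1, n)·C(n−1+λ_2, n) / (C(n−1+T_0/(mc), n)·C(n−1+(T_0−1)/(mc), n))]·X_{0,i}·X_{0,j} − [(mc)²·(n + T_0/(mc))²/T_0²]·X_{0,i}·X_{0,j}, where C(x,n) denotes the generalized binomial coefficient for real x. -/
open Finset

/-- Total initial number of balls in the `r`-color urn. -/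
def totX (r : ℕ) (X0 : Fin r → ℕ) : ℕ := ∑ i, X0 i

/-- Total number of balls after `n` draws: `T_n = T_0 + n·m·c`. -/
def urnTr (r m c : ℕ) (X0 : Fin r → ℕ) (n : ℕ) : ℕ := totX r X0 + n * m * c

/-- Probability mass function of the composition vector after `n` draws in the
`r`-color model `M`: at each step `m` balls are drawn without replacement and, if
`kᵢ` balls of color `i` are drawn, they are returned together with `c·kᵢ` additional
balls of color `i`. -/
noncomputable def massMr (r m c : ℕ) (X0 : Fin r → ℕ) : ℕ → (Fin r → ℕ) → ℝ
  | 0 => fun x => if x = X0 then 1 else 0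
  | n + 1 => fun x =>
      ∑ y ∈ Fintype.piFinset (fun _ : Fin r => Finset.range (urnTr r m c X0 n + 1)),
        ∑ k ∈ Fintype.piFinset (fun _ : Fin r => Finset.range (m + 1)),
          if (∑ i, k i) = m ∧ x = (fun i => y i + c * k i) then
            massMr r m c X0 n y *
              ((∏ i, (Nat.choose (y i) (k i) : ℝ)) / (Nat.choose (urnTr r m c X0 n) m : ℝ))
          else 0

/-- The covariance `Cov(X_{n,i}, X_{n,j})` in the `r`-color model `M`. -/
noncomputable def covMr (r m c : ℕ) (X0 : Fin r → ℕ) (n : ℕ) (i j : Fin r) : ℝ :=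
  (∑ x ∈ Fintype.piFinset (fun _ : Fin r => Finset.range (urnTr r m c X0 n + 1)),
      massMr r m c X0 n x * (x i : ℝ) * (x j : ℝ)) -
    (∑ x ∈ Fintype.piFinset (fun _ : Fin r => Finset.range (urnTr r m c X0 n + 1)),
        massMr r m c X0 n x * (x i : ℝ)) *
      (∑ x ∈ Fintype.piFinset (fun _ : Fin r => Finset.range (urnTr r m c X0 n + 1)),
        massMr r m c X0 n x * (x j : ℝ))

/-- Generalized binomial coefficient `C(x,n) = x(x-1)⋯(x-n+1)/n!` for real `x`. -/
noncomputable def gchoose (x : ℝ) (n : ℕ) : ℝ :=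
  (∏ i ∈ Finset.range n, (x - (i : ℝ))) / (Nat.factorial n : ℝ)


set_option linter.unusedSectionVars false
set_option linter.unusedVariables false

open Finset

variable {ι : Type*} [Fintype ι] [DecidableEq ι]

/-- Peel off one coordinate of a `piAntidiag` sum. -/
lemma urn_peel (s : Finset ι) (i : ι) (hi : i ∉ s) (m : ℕ) (y : ι → ℕ) (F : ℕ → ℕ)
    (G : (ι → ℕ) → ℕ) (hG : ∀ (g : ι → ℕ) (a : ℕ), G (g + fun l => if l = i then a else 0) = G g) :
    ∑ k ∈ piAntidiag (cons i s hi) m, F (k i) * G k * ∏ l ∈ cons i s hi, (y l).choose (k l)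
      = ∑ p ∈ antidiagonal m, F p.1 * (y i).choose p.1 *
          ∑ g ∈ piAntidiag s p.2, G g * ∏ l ∈ s, (y l).choose (g l) := by
  rw [piAntidiag_cons, sum_disjiUnion]
  refine sum_congr rfl fun p hp => ?_
  rw [sum_map, mul_sum]
  refine sum_congr rfl fun g hg => ?_
  obtain ⟨hsum, hsupp⟩ := mem_piAntidiag.mp hg
  have hgi : g i = 0 := by
    by_contra h; exact hi (hsupp i h)
  have hk : (addRightEmbedding fun t => if t = i then p.1 else 0) g
      = g + fun t => if t = i then p.1 else 0 := rfl
  rw [hk, hG]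
  have hki : (g + fun t => if t = i then p.1 else 0) i = p.1 := by
    simp [hgi]
  rw [prod_cons, hki]
  have : ∀ l ∈ s, (y l).choose ((g + fun t => if t = i then p.1 else 0) l) = (y l).choose (g l) := by
    intro l hl
    have hli : l ≠ i := fun h => hi (h ▸ hl)
    simp [hli]
  rw [prod_congr rfl this]
  ring

/-- Multivariate Vandermonde. -/
lemma urn_vand (s : Finset ι) (y : ι → ℕ) (m : ℕ) :
    ∑ k ∈ piAntidiag s m, ∏ l ∈ s, (y l).choose (k l) = (∑ l ∈ s, y l).choose m := by
  induction s using Finset.cons_induction generalizing m with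
  | empty =>
      rw [piAntidiag_empty]
      split_ifs with h
      · simp [h]
      · rw [sum_empty, sum_empty, Nat.choose_eq_zero_of_lt (Nat.pos_of_ne_zero h)]
  | cons i s hi ih =>
      have := urn_peel s i hi m y (fun _ => 1) (fun _ => 1) (fun _ _ => rfl)
      simp only [one_mul] at this
      rw [this]
      simp only [ih]
      rw [sum_cons, Nat.add_choose_eq]

lemma urn_range_vand (p q M : ℕ) :
    ∑ a ∈ range (M + 1), p.choose a * q.choose (M - a) = (p + q).choose M := by
  rw [Nat.add_choose_eq, Finset.Nat.sum_antidiagonal_eq_sum_range_succ_mk]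

lemma urn_onedim (p q m : ℕ) :
    (p + q) * ∑ ab ∈ antidiagonal m, ab.1 * (p.choose ab.1 * q.choose ab.2)
      = m * (p + q).choose m * p := by
  cases m with
  | zero => simp
  | succ M =>
    cases p with
    | zero =>
      have : ∑ ab ∈ antidiagonal (M + 1), ab.1 * (Nat.choose 0 ab.1 * q.choose ab.2) = 0 := by
        refine sum_eq_zero fun ab _ => ?_
        cases h : ab.1 with
        | zero => simp [h]
        | succ a => simp [Nat.choose]
      rw [this]; ring
    | succ P =>
      rw [Finset.Nat.sum_antidiagonal_eq_sum_range_succ_mk, Finset.sum_range_succ']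
      simp only [Nat.zero_mul, zero_mul, add_zero]
      have hterm : ∀ a ∈ range (M + 1),
          (a + 1) * ((P+1).choose (a+1) * q.choose (M + 1 - (a + 1)))
            = (P + 1) * (P.choose a * q.choose (M - a)) := by
        intro a _
        have h1 : (P + 1) * P.choose a = (P+1).choose (a+1) * (a+1) := Nat.add_one_mul_choose_eq P a
        have h2 : M + 1 - (a + 1) = M - a := by omega
        rw [h2]
        calc (a + 1) * ((P+1).choose (a+1) * q.choose (M - a))
            = ((P+1).choose (a+1) * (a+1)) * q.choose (M - a) := by ring
          _ = ((P + 1) * P.choose a) * q.choose (M - a) := by rw [h1]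
          _ = (P + 1) * (P.choose a * q.choose (M - a)) := by ring
      rw [sum_congr rfl hterm, ← mul_sum, urn_range_vand]
      have h3 : (P + q + 1) * (P + q).choose M = (P + q + 1).choose (M+1) * (M+1) :=
        Nat.add_one_mul_choose_eq _ _
      have : P + 1 + q = P + q + 1 := by ring
      rw [this]
      calc (P + q + 1) * ((P + 1) * (P + q).choose M)
          = (P + 1) * ((P + q + 1) * (P + q).choose M) := by ring
        _ = (P + 1) * ((P + q + 1).choose (M+1) * (M+1)) := by rw [h3]
        _ = (M + 1) * (P + q + 1).choose (M + 1) * (P + 1) := by ring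

lemma urn_onedim2 (p q m : ℕ) :
    (p + q) * ((p + q) - 1) * ∑ ab ∈ antidiagonal m, ab.1 * ab.2 * (p.choose ab.1 * q.choose ab.2)
      = m * (m - 1) * (p + q).choose m * (p * q) := by
  have hsmall : ∀ m' : ℕ, m' ≤ 1 →
      ∑ ab ∈ antidiagonal m', ab.1 * ab.2 * (p.choose ab.1 * q.choose ab.2) = 0 := by
    intro m' hm'
    refine sum_eq_zero fun ab hab => ?_
    rw [HasAntidiagonal.mem_antidiagonal] at hab
    have : ab.1 = 0 ∨ ab.2 = 0 := by omega
    rcases this with h | h <;> simp [h]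
  match m with
  | 0 => rw [hsmall 0 (by norm_num)]; ring
  | 1 => rw [hsmall 1 (by norm_num)]; ring
  | (M + 2) =>
    match p, q with
    | 0, q =>
      have : ∑ ab ∈ antidiagonal (M+2), ab.1 * ab.2 * (Nat.choose 0 ab.1 * q.choose ab.2) = 0 := by
        refine sum_eq_zero fun ab _ => ?_
        cases h : ab.1 with
        | zero => simp [h]
        | succ a => simp [Nat.choose]
      rw [this]; ring
    | P + 1, 0 =>
      have : ∑ ab ∈ antidiagonal (M+2), ab.1 * ab.2 * ((P+1).choose ab.1 * Nat.choose 0 ab.2) = 0 := by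
        refine sum_eq_zero fun ab _ => ?_
        cases h : ab.2 with
        | zero => simp [h]
        | succ a => simp [Nat.choose]
      rw [this]; ring
    | P + 1, Q + 1 =>
      rw [Finset.Nat.sum_antidiagonal_eq_sum_range_succ_mk, Finset.sum_range_succ',
        Finset.sum_range_succ]
      simp only [Nat.zero_mul, zero_mul, add_zero]
      have htop : (M + 1 + 1) * (M + 2 - (M + 1 + 1)) * ((P+1).choose (M+1+1) * (Q+1).choose (M + 2 - (M+1+1))) = 0 := by
        simp
      rw [htop, add_zero]
      have hterm : ∀ a ∈ range (M + 1),
          (a + 1) * (M + 2 - (a + 1)) * ((P+1).choose (a+1) * (Q+1).choose (M + 2 - (a + 1)))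
            = ((P + 1) * (Q + 1)) * (P.choose a * Q.choose (M - a)) := by
        intro a ha
        rw [mem_range] at ha
        have h2 : M + 2 - (a + 1) = (M - a) + 1 := by omega
        have h1 : (P + 1) * P.choose a = (P+1).choose (a+1) * (a+1) := Nat.add_one_mul_choose_eq P a
        have h3 : (Q + 1) * Q.choose (M - a) = (Q+1).choose (M - a + 1) * (M - a + 1) :=
          Nat.add_one_mul_choose_eq Q (M - a)
        rw [h2]
        calc (a + 1) * (M - a + 1) * ((P+1).choose (a+1) * (Q+1).choose (M - a + 1))
            = ((P+1).choose (a+1) * (a+1)) * ((Q+1).choose (M - a + 1) * (M - a + 1)) := by ring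
          _ = ((P + 1) * P.choose a) * ((Q + 1) * Q.choose (M - a)) := by rw [h1, h3]
          _ = ((P + 1) * (Q + 1)) * (P.choose a * Q.choose (M - a)) := by ring
      rw [sum_congr rfl hterm, ← mul_sum, urn_range_vand]
      have hS : P + 1 + (Q + 1) = P + Q + 2 := by ring
      rw [hS]
      have h4 : (P + Q + 1) * (P + Q).choose M = (P + Q + 1).choose (M+1) * (M+1) :=
        Nat.add_one_mul_choose_eq _ _
      have h5 : (P + Q + 2) * (P + Q + 1).choose (M+1) = (P + Q + 2).choose (M+2) * (M+2) :=
        Nat.add_one_mul_choose_eq _ _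
      calc (P + Q + 2) * (P + Q + 2 - 1) * ((P + 1) * (Q + 1) * (P + Q).choose M)
          = ((P+1)*(Q+1)) * ((P + Q + 2) * ((P + Q + 1) * (P + Q).choose M)) := by
            have : P + Q + 2 - 1 = P + Q + 1 := by omega
            rw [this]; ring
        _ = ((P+1)*(Q+1)) * ((P + Q + 2) * ((P + Q + 1).choose (M+1) * (M+1))) := by rw [h4]
        _ = ((P+1)*(Q+1)) * (M+1) * ((P + Q + 2) * (P + Q + 1).choose (M+1)) := by ring
        _ = ((P+1)*(Q+1)) * (M+1) * ((P + Q + 2).choose (M+2) * (M+2)) := by rw [h5]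
        _ = (M + 2) * (M + 2 - 1) * (P + Q + 2).choose (M+2) * ((P + 1) * (Q + 1)) := by
            have : M + 2 - 1 = M + 1 := by omega
            rw [this]; ring

lemma urn_sum1 (s : Finset ι) (y : ι → ℕ) (m : ℕ) (i : ι) (hi : i ∈ s) :
    (∑ l ∈ s, y l) * ∑ k ∈ piAntidiag s m, k i * ∏ l ∈ s, (y l).choose (k l)
      = m * (∑ l ∈ s, y l).choose m * y i := by
  have hcons : cons i (s.erase i) (notMem_erase i s) = s := by
    rw [cons_eq_insert, insert_erase hi]
  rw [← hcons]
  have hpeel := urn_peel (s.erase i) i (notMem_erase i s) m y id (fun _ => 1) (fun _ _ => rfl)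
  simp only [id_eq, mul_one, one_mul] at hpeel
  rw [hpeel, sum_cons]
  have hinner : ∀ p ∈ antidiagonal m,
      p.1 * (y i).choose p.1 * ∑ g ∈ piAntidiag (s.erase i) p.2, ∏ l ∈ s.erase i, (y l).choose (g l)
        = p.1 * ((y i).choose p.1 * (∑ l ∈ s.erase i, y l).choose p.2) := by
    intro p _
    rw [urn_vand]; ring
  rw [sum_congr rfl hinner, urn_onedim]

lemma urn_sum2 (s : Finset ι) (y : ι → ℕ) (m : ℕ) (i j : ι) (hi : i ∈ s) (hj : j ∈ s)
    (hij : i ≠ j) (hyj : 1 ≤ y j) :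
    (∑ l ∈ s, y l) * ((∑ l ∈ s, y l) - 1) *
        ∑ k ∈ piAntidiag s m, k i * k j * ∏ l ∈ s, (y l).choose (k l)
      = m * (m - 1) * (∑ l ∈ s, y l).choose m * (y i * y j) := by
  have hji : j ∈ s.erase i := mem_erase.mpr ⟨fun h => hij h.symm, hj⟩
  have hQ : y j ≤ ∑ l ∈ s.erase i, y l := single_le_sum (fun _ _ => Nat.zero_le _) hji
  have hQpos : 0 < ∑ l ∈ s.erase i, y l := lt_of_lt_of_le hyj hQ
  set Q := ∑ l ∈ s.erase i, y l with hQdef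
  have hcons : cons i (s.erase i) (notMem_erase i s) = s := by
    rw [cons_eq_insert, insert_erase hi]
  rw [← hcons]
  have hG : ∀ (g : ι → ℕ) (a : ℕ),
      (fun k : ι → ℕ => k j) (g + fun l => if l = i then a else 0) = g j := by
    intro g a
    have : j ≠ i := fun h => hij h.symm
    simp [this]
  have hpeel := urn_peel (s.erase i) i (notMem_erase i s) m y id (fun k => k j) hG
  simp only [id_eq] at hpeel
  rw [hpeel, sum_cons]
  refine Nat.eq_of_mul_eq_mul_left hQpos ?_
  rw [← mul_assoc, mul_comm Q, mul_assoc, mul_sum]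
  have hinner : ∀ p ∈ antidiagonal m,
      Q * (p.1 * (y i).choose p.1 *
          ∑ g ∈ piAntidiag (s.erase i) p.2, g j * ∏ l ∈ s.erase i, (y l).choose (g l))
        = y j * (p.1 * p.2 * ((y i).choose p.1 * Q.choose p.2)) := by
    intro p _
    have h1 := urn_sum1 (s.erase i) y p.2 j hji
    rw [← hQdef] at h1
    calc Q * (p.1 * (y i).choose p.1 *
          ∑ g ∈ piAntidiag (s.erase i) p.2, g j * ∏ l ∈ s.erase i, (y l).choose (g l))
        = p.1 * (y i).choose p.1 *
            (Q * ∑ g ∈ piAntidiag (s.erase i) p.2, g j * ∏ l ∈ s.erase i, (y l).choose (g l)) := by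
          ring
      _ = p.1 * (y i).choose p.1 * (p.2 * Q.choose p.2 * y j) := by rw [h1]
      _ = y j * (p.1 * p.2 * ((y i).choose p.1 * Q.choose p.2)) := by ring
  rw [sum_congr rfl hinner, ← mul_sum]
  have h2 := urn_onedim2 (y i) Q m
  calc (y i + Q) * (y i + Q - 1) * (y j * ∑ p ∈ antidiagonal m,
          p.1 * p.2 * ((y i).choose p.1 * Q.choose p.2))
      = y j * ((y i + Q) * (y i + Q - 1) * ∑ p ∈ antidiagonal m,
          p.1 * p.2 * ((y i).choose p.1 * Q.choose p.2)) := by ring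
    _ = y j * (m * (m - 1) * (y i + Q).choose m * (y i * Q)) := by rw [h2]
    _ = Q * (m * (m - 1) * (y i + Q).choose m * (y i * y j)) := by ring

lemma urn_sum_ite (f : (ι → ℕ) → ℝ) (m : ℕ) :
    ∑ k ∈ Fintype.piFinset (fun _ : ι => range (m + 1)), (if (∑ l, k l) = m then f k else 0)
      = ∑ k ∈ piAntidiag (univ : Finset ι) m, f k := by
  rw [← Finset.sum_filter]
  refine sum_congr ?_ fun _ _ => rfl
  ext k
  simp only [mem_filter, Fintype.mem_piFinset, mem_range, mem_piAntidiag, mem_univ, imp_true_iff,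
    and_true]
  constructor
  · rintro ⟨_, h⟩; exact h
  · intro h
    refine ⟨fun l => ?_, h⟩
    have h2 := single_le_sum (f := k) (fun _ _ => Nat.zero_le _) (mem_univ l)
    rw [h] at h2
    omega

lemma urn_cast_vand (y : ι → ℕ) (m T : ℕ) (hT : ∑ l, y l = T) :
    ∑ k ∈ piAntidiag (univ : Finset ι) m, ∏ l, ((y l).choose (k l) : ℝ) = (T.choose m : ℝ) := by
  rw [← hT]
  rw [show ∑ l : ι, y l = ∑ l ∈ univ, y l from rfl, ← urn_vand univ y m]
  push_cast
  rfl

lemma urn_cast_sum1 (y : ι → ℕ) (m T : ℕ) (i : ι) (hT : ∑ l, y l = T) (hTpos : 0 < T) :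
    ∑ k ∈ piAntidiag (univ : Finset ι) m, (k i : ℝ) * ∏ l, ((y l).choose (k l) : ℝ)
      = (m : ℝ) * (T.choose m : ℝ) * (y i : ℝ) / (T : ℝ) := by
  have h := urn_sum1 univ y m i (mem_univ i)
  rw [show ∑ l ∈ univ, y l = T from hT] at h
  have hcast : (T : ℝ) * ∑ k ∈ piAntidiag (univ : Finset ι) m,
      (k i : ℝ) * ∏ l, ((y l).choose (k l) : ℝ) = (m : ℝ) * (T.choose m : ℝ) * (y i : ℝ) := by
    have := congrArg (fun n : ℕ => (n : ℝ)) h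
    push_cast at this
    convert this using 2
  have hT0 : (T : ℝ) ≠ 0 := Nat.cast_ne_zero.mpr hTpos.ne'
  field_simp
  linarith [hcast]

lemma urn_cast_sum2 (y : ι → ℕ) (m T : ℕ) (i j : ι) (hT : ∑ l, y l = T) (h2T : 2 ≤ T)
    (hij : i ≠ j) (hyj : 1 ≤ y j) :
    ∑ k ∈ piAntidiag (univ : Finset ι) m, (k i : ℝ) * (k j : ℝ) * ∏ l, ((y l).choose (k l) : ℝ)
      = (m : ℝ) * ((m : ℝ) - 1) * (T.choose m : ℝ) * (y i : ℝ) * (y j : ℝ)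
          / ((T : ℝ) * ((T : ℝ) - 1)) := by
  have hT0 : (T : ℝ) ≠ 0 := by
    have : (0:ℕ) < T := by omega
    positivity
  have hT1' : (T : ℝ) - 1 ≠ 0 := by
    have : (2:ℝ) ≤ (T:ℝ) := by exact_mod_cast h2T
    linarith
  cases m with
  | zero => simp
  | succ M =>
    have h := urn_sum2 univ y (M+1) i j (mem_univ i) (mem_univ j) hij hyj
    rw [show ∑ l ∈ univ, y l = T from hT] at h
    have hT1 : (1:ℕ) ≤ T := le_trans (by norm_num) h2T
    have hce : (((T * (T - 1)) * ∑ k ∈ piAntidiag (univ : Finset ι) (M+1),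
        k i * k j * ∏ l, (y l).choose (k l) : ℕ) : ℝ)
          = (((M+1) * (M+1-1) * T.choose (M+1) * (y i * y j) : ℕ) : ℝ) := by
      rw [h]
    push_cast [Nat.cast_sub hT1] at hce
    rw [eq_div_iff (mul_ne_zero hT0 hT1')]
    push_cast
    linear_combination hce


section UrnModel

variable {r m c : ℕ} {X0 : Fin r → ℕ}

lemma urn_supp : ∀ (n : ℕ) (x : Fin r → ℕ), massMr r m c X0 n x ≠ 0 →
    (∑ l, x l = urnTr r m c X0 n ∧ ∀ l, X0 l ≤ x l) := by
  intro n
  induction n with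
  | zero =>
    intro x hx
    simp only [massMr] at hx
    have hxX : x = X0 := by
      by_contra h; rw [if_neg h] at hx; exact hx rfl
    subst hxX
    exact ⟨by simp [urnTr, totX], fun l => le_refl _⟩
  | succ n ih =>
    intro x hx
    simp only [massMr] at hx
    obtain ⟨y, hy, hy2⟩ := Finset.exists_ne_zero_of_sum_ne_zero hx
    obtain ⟨k, hk, hk2⟩ := Finset.exists_ne_zero_of_sum_ne_zero hy2
    have hcond : (∑ l, k l) = m ∧ x = (fun l => y l + c * k l) := by
      by_contra h; rw [if_neg h] at hk2; exact hk2 rfl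
    obtain ⟨hksum, hxeq⟩ := hcond
    have hmass : massMr r m c X0 n y ≠ 0 := by
      intro h; rw [if_pos ⟨hksum, hxeq⟩, h, zero_mul] at hk2; exact hk2 rfl
    obtain ⟨hysum, hyge⟩ := ih y hmass
    subst hxeq
    constructor
    · have : ∑ l, (y l + c * k l) = (∑ l, y l) + c * ∑ l, k l := by
        rw [Finset.sum_add_distrib, Finset.mul_sum]
      rw [this, hysum, hksum]
      simp only [urnTr]
      ring
    · intro l
      exact le_trans (hyge l) (Nat.le_add_right _ _)

lemma urn_collapse {α : Type*} [DecidableEq α] (s : Finset α) (t : α) (P : Prop) [Decidable P]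
    (f : α → ℝ) (ht : P → t ∈ s) :
    ∑ x ∈ s, (if P ∧ x = t then f x else 0) = if P then f t else 0 := by
  by_cases hP : P
  · simp only [hP, true_and, if_true]
    rw [Finset.sum_ite_eq' s t f, if_pos (ht hP)]
  · simp [hP]

lemma urn_cond1 (y : Fin r → ℕ) (T : ℕ) (hT : ∑ l, y l = T) (hmT : m ≤ T) (h2T : 2 ≤ T)
    (i : Fin r) :
    ∑ k ∈ piAntidiag (univ : Finset (Fin r)) m,
        (∏ l, ((y l).choose (k l) : ℝ)) / (T.choose m : ℝ) * ((y i + c * k i : ℕ) : ℝ)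
      = (y i : ℝ) * (1 + (c : ℝ) * (m : ℝ) / (T : ℝ)) := by
  have hCT : (0:ℝ) < (T.choose m : ℝ) := by
    exact_mod_cast Nat.choose_pos hmT
  have hT0 : (T : ℝ) ≠ 0 := by positivity
  have hterm : ∀ k ∈ piAntidiag (univ : Finset (Fin r)) m,
      (∏ l, ((y l).choose (k l) : ℝ)) / (T.choose m : ℝ) * ((y i + c * k i : ℕ) : ℝ)
        = ((y i : ℝ) / (T.choose m : ℝ)) * ∏ l, ((y l).choose (k l) : ℝ)
          + ((c : ℝ) / (T.choose m : ℝ)) * ((k i : ℝ) * ∏ l, ((y l).choose (k l) : ℝ)) := by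
    intro k _
    push_cast
    ring
  rw [Finset.sum_congr rfl hterm, Finset.sum_add_distrib, ← Finset.mul_sum, ← Finset.mul_sum,
    urn_cast_vand y m T hT, urn_cast_sum1 y m T i hT (by omega)]
  field_simp

lemma urn_cond2 (y : Fin r → ℕ) (T : ℕ) (hT : ∑ l, y l = T) (hmT : m ≤ T) (h2T : 2 ≤ T)
    (i j : Fin r) (hij : i ≠ j) (hyi : 1 ≤ y i) (hyj : 1 ≤ y j) :
    ∑ k ∈ piAntidiag (univ : Finset (Fin r)) m,
        (∏ l, ((y l).choose (k l) : ℝ)) / (T.choose m : ℝ) * ((y i + c * k i : ℕ) : ℝ)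
          * ((y j + c * k j : ℕ) : ℝ)
      = (y i : ℝ) * (y j : ℝ) * (1 + 2 * (c : ℝ) * (m : ℝ) / (T : ℝ)
          + (c : ℝ) ^ 2 * (m : ℝ) * ((m : ℝ) - 1) / ((T : ℝ) * ((T : ℝ) - 1))) := by
  have hCT : (0:ℝ) < (T.choose m : ℝ) := by
    exact_mod_cast Nat.choose_pos hmT
  have hT0 : (T : ℝ) ≠ 0 := by positivity
  have hT1 : (T : ℝ) - 1 ≠ 0 := by
    have : (2:ℝ) ≤ (T:ℝ) := by exact_mod_cast h2T
    linarith
  have hterm : ∀ k ∈ piAntidiag (univ : Finset (Fin r)) m,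
      (∏ l, ((y l).choose (k l) : ℝ)) / (T.choose m : ℝ) * ((y i + c * k i : ℕ) : ℝ)
          * ((y j + c * k j : ℕ) : ℝ)
        = (((y i : ℝ) * (y j : ℝ)) / (T.choose m : ℝ)) * ∏ l, ((y l).choose (k l) : ℝ)
          + (((c : ℝ) * (y j : ℝ)) / (T.choose m : ℝ))
              * ((k i : ℝ) * ∏ l, ((y l).choose (k l) : ℝ))
          + (((c : ℝ) * (y i : ℝ)) / (T.choose m : ℝ))
              * ((k j : ℝ) * ∏ l, ((y l).choose (k l) : ℝ))
          + (((c : ℝ) ^ 2) / (T.choose m : ℝ))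
              * ((k i : ℝ) * (k j : ℝ) * ∏ l, ((y l).choose (k l) : ℝ)) := by
    intro k _
    push_cast
    ring
  rw [Finset.sum_congr rfl hterm, Finset.sum_add_distrib, Finset.sum_add_distrib,
    Finset.sum_add_distrib, ← Finset.mul_sum, ← Finset.mul_sum, ← Finset.mul_sum,
    ← Finset.mul_sum, urn_cast_vand y m T hT, urn_cast_sum1 y m T i hT (by omega),
    urn_cast_sum1 y m T j hT (by omega), urn_cast_sum2 y m T i j hT h2T hij hyj]
  field_simp
  ring


lemma urn_rec1 (hm : 1 ≤ m) (hmT : m ≤ totX r X0) (h2T : 2 ≤ totX r X0) (n : ℕ) (i : Fin r) :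
    ∑ x ∈ Fintype.piFinset (fun _ : Fin r => Finset.range (urnTr r m c X0 (n+1) + 1)),
        massMr r m c X0 (n+1) x * (x i : ℝ)
      = (1 + (c : ℝ) * (m : ℝ) / (urnTr r m c X0 n : ℝ)) *
          ∑ y ∈ Fintype.piFinset (fun _ : Fin r => Finset.range (urnTr r m c X0 n + 1)),
            massMr r m c X0 n y * (y i : ℝ) := by
  have hmT' : m ≤ urnTr r m c X0 n := le_trans hmT (Nat.le_add_right _ _)
  have h2T' : 2 ≤ urnTr r m c X0 n := le_trans h2T (Nat.le_add_right _ _)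
  simp only [massMr, Finset.sum_mul, ite_mul, zero_mul]
  rw [Finset.sum_comm]
  rw [Finset.mul_sum]
  refine Finset.sum_congr rfl fun y hy => ?_
  rw [Finset.sum_comm]
  by_cases h0 : massMr r m c X0 n y = 0
  · simp [h0]
  obtain ⟨hysum, hyge⟩ := urn_supp n y h0
  have hcoll : ∀ k ∈ Fintype.piFinset (fun _ : Fin r => Finset.range (m + 1)),
      (∑ x ∈ Fintype.piFinset (fun _ : Fin r => Finset.range (urnTr r m c X0 (n+1) + 1)),
        if (∑ l, k l) = m ∧ x = (fun l => y l + c * k l) then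
          massMr r m c X0 n y *
            ((∏ l, (Nat.choose (y l) (k l) : ℝ)) / (Nat.choose (urnTr r m c X0 n) m : ℝ))
            * (x i : ℝ)
        else 0)
      = if (∑ l, k l) = m then
          massMr r m c X0 n y *
            ((∏ l, (Nat.choose (y l) (k l) : ℝ)) / (Nat.choose (urnTr r m c X0 n) m : ℝ)
            * ((y i + c * k i : ℕ) : ℝ))
        else 0 := by
    intro k hk
    have hmem : (∑ l, k l) = m →
        (fun l => y l + c * k l) ∈ Fintype.piFinset
          (fun _ : Fin r => Finset.range (urnTr r m c X0 (n+1) + 1)) := by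
      intro hP
      rw [Fintype.mem_piFinset]
      intro l
      rw [Finset.mem_range]
      have h1 : y l ≤ urnTr r m c X0 n := by
        rw [← hysum]
        exact Finset.single_le_sum (fun _ _ => Nat.zero_le _) (Finset.mem_univ l)
      have h2 : k l ≤ m := by
        rw [Fintype.mem_piFinset] at hk
        have := hk l
        rw [Finset.mem_range] at this
        omega
      have h3 : urnTr r m c X0 (n+1) = urnTr r m c X0 n + m * c := by
        simp only [urnTr]; ring
      have h4 : c * k l ≤ c * m := Nat.mul_le_mul_left c h2
      have h5 : c * m = m * c := Nat.mul_comm c m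
      omega
    have := urn_collapse
      (Fintype.piFinset (fun _ : Fin r => Finset.range (urnTr r m c X0 (n+1) + 1)))
      (fun l => y l + c * k l) ((∑ l, k l) = m)
      (fun x => massMr r m c X0 n y *
        ((∏ l, (Nat.choose (y l) (k l) : ℝ)) / (Nat.choose (urnTr r m c X0 n) m : ℝ))
        * (x i : ℝ)) hmem
    rw [this]
    split_ifs with h
    · ring
    · rfl
  rw [Finset.sum_congr rfl hcoll]
  have hite := urn_sum_ite (ι := Fin r)
    (fun k => massMr r m c X0 n y *
      ((∏ l, (Nat.choose (y l) (k l) : ℝ)) / (Nat.choose (urnTr r m c X0 n) m : ℝ)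
        * ((y i + c * k i : ℕ) : ℝ))) m
  rw [hite, ← Finset.mul_sum]
  have hc1 := urn_cond1 (c := c) y (urnTr r m c X0 n) hysum hmT' h2T' i
  have hsplit : ∀ k ∈ piAntidiag (univ : Finset (Fin r)) m,
      (∏ l, (Nat.choose (y l) (k l) : ℝ)) / (Nat.choose (urnTr r m c X0 n) m : ℝ)
          * ((y i + c * k i : ℕ) : ℝ)
        = (∏ l, ((y l).choose (k l) : ℝ)) / ((urnTr r m c X0 n).choose m : ℝ)
          * ((y i + c * k i : ℕ) : ℝ) := fun k _ => rfl
  rw [Finset.sum_congr rfl hsplit, hc1]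
  ring

lemma urn_rec2 (hm : 1 ≤ m) (hmT : m ≤ totX r X0) (h2T : 2 ≤ totX r X0)
    (hX0 : ∀ l, 1 ≤ X0 l) (n : ℕ) (i j : Fin r) (hij : i ≠ j) :
    ∑ x ∈ Fintype.piFinset (fun _ : Fin r => Finset.range (urnTr r m c X0 (n+1) + 1)),
        massMr r m c X0 (n+1) x * (x i : ℝ) * (x j : ℝ)
      = (1 + 2 * (c : ℝ) * (m : ℝ) / (urnTr r m c X0 n : ℝ)
            + (c : ℝ) ^ 2 * (m : ℝ) * ((m : ℝ) - 1) /
              ((urnTr r m c X0 n : ℝ) * ((urnTr r m c X0 n : ℝ) - 1))) *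
          ∑ y ∈ Fintype.piFinset (fun _ : Fin r => Finset.range (urnTr r m c X0 n + 1)),
            massMr r m c X0 n y * (y i : ℝ) * (y j : ℝ) := by
  have hmT' : m ≤ urnTr r m c X0 n := le_trans hmT (Nat.le_add_right _ _)
  have h2T' : 2 ≤ urnTr r m c X0 n := le_trans h2T (Nat.le_add_right _ _)
  simp only [massMr, Finset.sum_mul, ite_mul, zero_mul]
  rw [Finset.sum_comm]
  rw [Finset.mul_sum]
  refine Finset.sum_congr rfl fun y hy => ?_
  rw [Finset.sum_comm]
  by_cases h0 : massMr r m c X0 n y = 0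
  · simp [h0]
  obtain ⟨hysum, hyge⟩ := urn_supp n y h0
  have hcoll : ∀ k ∈ Fintype.piFinset (fun _ : Fin r => Finset.range (m + 1)),
      (∑ x ∈ Fintype.piFinset (fun _ : Fin r => Finset.range (urnTr r m c X0 (n+1) + 1)),
        if (∑ l, k l) = m ∧ x = (fun l => y l + c * k l) then
          massMr r m c X0 n y *
            ((∏ l, (Nat.choose (y l) (k l) : ℝ)) / (Nat.choose (urnTr r m c X0 n) m : ℝ))
            * (x i : ℝ) * (x j : ℝ)
        else 0)
      = if (∑ l, k l) = m then
          massMr r m c X0 n y *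
            ((∏ l, (Nat.choose (y l) (k l) : ℝ)) / (Nat.choose (urnTr r m c X0 n) m : ℝ)
            * ((y i + c * k i : ℕ) : ℝ) * ((y j + c * k j : ℕ) : ℝ))
        else 0 := by
    intro k hk
    have hmem : (∑ l, k l) = m →
        (fun l => y l + c * k l) ∈ Fintype.piFinset
          (fun _ : Fin r => Finset.range (urnTr r m c X0 (n+1) + 1)) := by
      intro hP
      rw [Fintype.mem_piFinset]
      intro l
      rw [Finset.mem_range]
      have h1 : y l ≤ urnTr r m c X0 n := by
        rw [← hysum]
        exact Finset.single_le_sum (fun _ _ => Nat.zero_le _) (Finset.mem_univ l)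
      have h2 : k l ≤ m := by
        rw [Fintype.mem_piFinset] at hk
        have := hk l
        rw [Finset.mem_range] at this
        omega
      have h3 : urnTr r m c X0 (n+1) = urnTr r m c X0 n + m * c := by
        simp only [urnTr]; ring
      have h4 : c * k l ≤ c * m := Nat.mul_le_mul_left c h2
      have h5 : c * m = m * c := Nat.mul_comm c m
      omega
    have := urn_collapse
      (Fintype.piFinset (fun _ : Fin r => Finset.range (urnTr r m c X0 (n+1) + 1)))
      (fun l => y l + c * k l) ((∑ l, k l) = m)
      (fun x => massMr r m c X0 n y *
        ((∏ l, (Nat.choose (y l) (k l) : ℝ)) / (Nat.choose (urnTr r m c X0 n) m : ℝ))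
        * (x i : ℝ) * (x j : ℝ)) hmem
    rw [this]
    split_ifs with h
    · ring
    · rfl
  rw [Finset.sum_congr rfl hcoll]
  have hite := urn_sum_ite (ι := Fin r)
    (fun k => massMr r m c X0 n y *
      ((∏ l, (Nat.choose (y l) (k l) : ℝ)) / (Nat.choose (urnTr r m c X0 n) m : ℝ)
        * ((y i + c * k i : ℕ) : ℝ) * ((y j + c * k j : ℕ) : ℝ))) m
  rw [hite, ← Finset.mul_sum]
  have hc2 := urn_cond2 (c := c) y (urnTr r m c X0 n) hysum hmT' h2T' i j hij
    (le_trans (hX0 i) (hyge i)) (le_trans (hX0 j) (hyge j))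
  rw [show (∑ k ∈ piAntidiag (univ : Finset (Fin r)) m,
      (∏ l, (Nat.choose (y l) (k l) : ℝ)) / (Nat.choose (urnTr r m c X0 n) m : ℝ)
        * ((y i + c * k i : ℕ) : ℝ) * ((y j + c * k j : ℕ) : ℝ)) =
      (y i : ℝ) * (y j : ℝ) * (1 + 2 * (c : ℝ) * (m : ℝ) / (urnTr r m c X0 n : ℝ)
        + (c : ℝ) ^ 2 * (m : ℝ) * ((m : ℝ) - 1) /
          ((urnTr r m c X0 n : ℝ) * ((urnTr r m c X0 n : ℝ) - 1))) from hc2]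
  ring

/-- Per-step covariance growth factor. -/
noncomputable def gfac (r m c : ℕ) (X0 : Fin r → ℕ) (t : ℕ) : ℝ :=
  1 + 2 * (c : ℝ) * (m : ℝ) / (urnTr r m c X0 t : ℝ)
    + (c : ℝ) ^ 2 * (m : ℝ) * ((m : ℝ) - 1) /
      ((urnTr r m c X0 t : ℝ) * ((urnTr r m c X0 t : ℝ) - 1))

lemma urn_X0_mem (n : ℕ) : X0 ∈ Fintype.piFinset
    (fun _ : Fin r => Finset.range (urnTr r m c X0 n + 1)) := by
  rw [Fintype.mem_piFinset]
  intro l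
  rw [Finset.mem_range]
  have : X0 l ≤ totX r X0 := Finset.single_le_sum (fun _ _ => Nat.zero_le _) (Finset.mem_univ l)
  have h2 : totX r X0 ≤ urnTr r m c X0 n := Nat.le_add_right _ _
  omega

lemma urn_moment1 (hm : 1 ≤ m) (hmT : m ≤ totX r X0) (h2T : 2 ≤ totX r X0) (n : ℕ) (i : Fin r) :
    ∑ x ∈ Fintype.piFinset (fun _ : Fin r => Finset.range (urnTr r m c X0 n + 1)),
        massMr r m c X0 n x * (x i : ℝ)
      = (X0 i : ℝ) * (urnTr r m c X0 n : ℝ) / (totX r X0 : ℝ) := by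
  have hT00 : (totX r X0 : ℝ) ≠ 0 := by
    have : (0:ℕ) < totX r X0 := by omega
    positivity
  induction n with
  | zero =>
    simp only [massMr, ite_mul, one_mul, zero_mul]
    rw [Finset.sum_ite_eq' _ X0 (fun x => (x i : ℝ)), if_pos (urn_X0_mem 0)]
    rw [show urnTr r m c X0 0 = totX r X0 by simp [urnTr]]
    field_simp
  | succ n ih =>
    rw [urn_rec1 hm hmT h2T n i, ih]
    have hTpos : (0:ℝ) < (urnTr r m c X0 n : ℝ) := by
      have : (0:ℕ) < urnTr r m c X0 n := by
        have := Nat.le_add_right (totX r X0) (n * m * c)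
        simp only [urnTr]; omega
      positivity
    have hcast : (urnTr r m c X0 (n+1) : ℝ) = (urnTr r m c X0 n : ℝ) + (m : ℝ) * (c : ℝ) := by
      simp only [urnTr]
      push_cast
      ring
    rw [hcast]
    field_simp

lemma urn_moment2 (hm : 1 ≤ m) (hmT : m ≤ totX r X0) (h2T : 2 ≤ totX r X0)
    (hX0 : ∀ l, 1 ≤ X0 l) (i j : Fin r) (hij : i ≠ j) (n : ℕ) :
    ∑ x ∈ Fintype.piFinset (fun _ : Fin r => Finset.range (urnTr r m c X0 n + 1)),
        massMr r m c X0 n x * (x i : ℝ) * (x j : ℝ)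
      = (X0 i : ℝ) * (X0 j : ℝ) * ∏ t ∈ Finset.range n, gfac r m c X0 t := by
  induction n with
  | zero =>
    simp only [massMr, ite_mul, one_mul, zero_mul]
    rw [Finset.sum_ite_eq' _ X0 (fun x => (x i : ℝ) * (x j : ℝ))]
    rw [if_pos (urn_X0_mem 0)]
    simp
  | succ n ih =>
    rw [urn_rec2 hm hmT h2T hX0 n i j hij, ih, Finset.prod_range_succ]
    simp only [gfac]
    ring

lemma urn_gchoose_eq (lam : ℝ) (n : ℕ) :
    gchoose ((n : ℝ) - 1 + lam) n = (∏ t ∈ Finset.range n, (lam + (t : ℝ))) / (n.factorial : ℝ) := by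
  rw [gchoose]
  congr 1
  have h1 : ∀ j ∈ Finset.range n, ((n : ℝ) - 1 + lam - (j : ℝ)) = lam + ((n - 1 - j : ℕ) : ℝ) := by
    intro j hj
    rw [Finset.mem_range] at hj
    have hj1 : j ≤ n - 1 := by omega
    have hn1 : 1 ≤ n := by omega
    rw [Nat.cast_sub hj1, Nat.cast_sub hn1]
    push_cast
    ring
  rw [Finset.prod_congr rfl h1, Finset.prod_range_reflect (fun t => lam + (t : ℝ)) n]

lemma urn_gfac_eq (hm : 1 ≤ m) (hc : 1 ≤ c) (h3T : 3 ≤ totX r X0)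
    (lam1 lam2 : ℝ)
    (hlam1 : lam1 = (-(1/2) + (m : ℝ) * c + (totX r X0 : ℝ) +
      (1/2) * Real.sqrt (1 + 4 * (m : ℝ) * c * (1 + (c : ℝ)))) / ((m : ℝ) * c))
    (hlam2 : lam2 = (-(1/2) + (m : ℝ) * c + (totX r X0 : ℝ) -
      (1/2) * Real.sqrt (1 + 4 * (m : ℝ) * c * (1 + (c : ℝ)))) / ((m : ℝ) * c))
    (t : ℕ) :
    gfac r m c X0 t = ((lam1 + (t : ℝ)) * (lam2 + (t : ℝ))) /
      (((totX r X0 : ℝ) / ((m : ℝ) * c) + (t : ℝ)) *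
        (((totX r X0 : ℝ) - 1) / ((m : ℝ) * c) + (t : ℝ))) := by
  have hmc : ((m : ℝ) * c) ≠ 0 := by
    have hm' : (0:ℝ) < m := by exact_mod_cast hm
    have hc' : (0:ℝ) < c := by exact_mod_cast hc
    positivity
  set s := Real.sqrt (1 + 4 * (m : ℝ) * c * (1 + (c : ℝ))) with hsdef
  have hsnn : (0:ℝ) ≤ 1 + 4 * (m : ℝ) * c * (1 + (c : ℝ)) := by positivity
  have hs : s ^ 2 = 1 + 4 * (m : ℝ) * c * (1 + (c : ℝ)) := Real.sq_sqrt hsnn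
  have hTt : (urnTr r m c X0 t : ℝ) = (totX r X0 : ℝ) + (t : ℝ) * ((m : ℝ) * c) := by
    simp only [urnTr]
    push_cast
    ring
  set T : ℝ := (urnTr r m c X0 t : ℝ) with hTdef
  have hT3 : (3:ℝ) ≤ T := by
    rw [hTt]
    have h3 : (3:ℝ) ≤ (totX r X0 : ℝ) := by exact_mod_cast h3T
    have : (0:ℝ) ≤ (t : ℝ) * ((m : ℝ) * c) := by positivity
    linarith
  have hT0 : T ≠ 0 := by linarith
  have hT1 : T - 1 ≠ 0 := by linarith
  have h1 : lam1 + (t : ℝ) = (T + (m : ℝ) * c - 1/2 + s/2) / ((m : ℝ) * c) := by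
    rw [hlam1]
    field_simp
    rw [hTt]
    ring
  have h2 : lam2 + (t : ℝ) = (T + (m : ℝ) * c - 1/2 - s/2) / ((m : ℝ) * c) := by
    rw [hlam2]
    field_simp
    rw [hTt]
    ring
  have h3 : (totX r X0 : ℝ) / ((m : ℝ) * c) + (t : ℝ) = T / ((m : ℝ) * c) := by
    rw [hTt]
    field_simp
  have h4 : ((totX r X0 : ℝ) - 1) / ((m : ℝ) * c) + (t : ℝ) = (T - 1) / ((m : ℝ) * c) := by
    rw [hTt]
    field_simp
    ring
  rw [h1, h2, h3, h4]
  have hnum : (T + (m : ℝ) * c - 1/2 + s/2) * (T + (m : ℝ) * c - 1/2 - s/2)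
      = (T + (m : ℝ) * c - 1/2) ^ 2 - (1 + 4 * (m : ℝ) * c * (1 + (c : ℝ))) / 4 := by
    have : (T + (m : ℝ) * c - 1/2 + s/2) * (T + (m : ℝ) * c - 1/2 - s/2)
        = (T + (m : ℝ) * c - 1/2) ^ 2 - s ^ 2 / 4 := by ring
    rw [this, hs]
  rw [div_mul_div_comm, div_mul_div_comm, hnum, gfac, ← hTdef]
  field_simp
  ring

lemma urn_prod_gfac (hm : 1 ≤ m) (hc : 1 ≤ c) (h3T : 3 ≤ totX r X0)
    (lam1 lam2 : ℝ)
    (hlam1 : lam1 = (-(1/2) + (m : ℝ) * c + (totX r X0 : ℝ) +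
      (1/2) * Real.sqrt (1 + 4 * (m : ℝ) * c * (1 + (c : ℝ)))) / ((m : ℝ) * c))
    (hlam2 : lam2 = (-(1/2) + (m : ℝ) * c + (totX r X0 : ℝ) -
      (1/2) * Real.sqrt (1 + 4 * (m : ℝ) * c * (1 + (c : ℝ)))) / ((m : ℝ) * c))
    (n : ℕ) :
    ∏ t ∈ Finset.range n, gfac r m c X0 t
      = (gchoose ((n : ℝ) - 1 + lam1) n * gchoose ((n : ℝ) - 1 + lam2) n) /
          (gchoose ((n : ℝ) - 1 + (totX r X0 : ℝ) / ((m : ℝ) * c)) n *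
            gchoose ((n : ℝ) - 1 + ((totX r X0 : ℝ) - 1) / ((m : ℝ) * c)) n) := by
  have hm' : (0:ℝ) < m := by exact_mod_cast hm
  have hc' : (0:ℝ) < c := by exact_mod_cast hc
  have hmc : (0:ℝ) < (m : ℝ) * c := by positivity
  have h3 : (3:ℝ) ≤ (totX r X0 : ℝ) := by exact_mod_cast h3T
  rw [urn_gchoose_eq, urn_gchoose_eq, urn_gchoose_eq, urn_gchoose_eq]
  have hprod : ∏ t ∈ Finset.range n, gfac r m c X0 t
      = ((∏ t ∈ Finset.range n, (lam1 + (t:ℝ))) * ∏ t ∈ Finset.range n, (lam2 + (t:ℝ))) /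
          ((∏ t ∈ Finset.range n, ((totX r X0 : ℝ) / ((m : ℝ) * c) + (t:ℝ))) *
            ∏ t ∈ Finset.range n, (((totX r X0 : ℝ) - 1) / ((m : ℝ) * c) + (t:ℝ))) := by
    rw [Finset.prod_congr rfl (fun t _ => urn_gfac_eq hm hc h3T lam1 lam2 hlam1 hlam2 t),
      Finset.prod_div_distrib, Finset.prod_mul_distrib, Finset.prod_mul_distrib]
  rw [hprod]
  have hP3 : (0:ℝ) < ∏ t ∈ Finset.range n, ((totX r X0 : ℝ) / ((m : ℝ) * c) + (t:ℝ)) := by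
    apply Finset.prod_pos
    intro t _
    have : (0:ℝ) ≤ (t:ℝ) := Nat.cast_nonneg t
    have h5 : (0:ℝ) < (totX r X0 : ℝ) / ((m : ℝ) * c) := by positivity
    linarith
  have hP4 : (0:ℝ) < ∏ t ∈ Finset.range n, (((totX r X0 : ℝ) - 1) / ((m : ℝ) * c) + (t:ℝ)) := by
    apply Finset.prod_pos
    intro t _
    have : (0:ℝ) ≤ (t:ℝ) := Nat.cast_nonneg t
    have h5 : (0:ℝ) < ((totX r X0 : ℝ) - 1) / ((m : ℝ) * c) := by
      apply div_pos
      · linarith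
      · exact hmc
    linarith
  have hfac : ((n.factorial : ℕ) : ℝ) ≠ 0 := by
    exact_mod_cast (Nat.factorial_pos n).ne'
  have key : ∀ (A B C D f : ℝ), C ≠ 0 → D ≠ 0 → f ≠ 0 →
      (A * B) / (C * D) = (A / f * (B / f)) / (C / f * (D / f)) := by
    intro A B C D f hC hD hf
    rw [div_mul_div_comm, div_mul_div_comm, div_div_div_eq]
    rw [mul_comm (A * B) (f * f), mul_div_mul_left _ _ (mul_ne_zero hf hf)]
  exact key _ _ _ _ _ hP3.ne' hP4.ne' hfac

end UrnModel

/-- In the `r`-color model `M` with `r ≥ 3`, the exact covariance of the numbers of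
balls of two distinct colors `i ≠ j` after `n` draws. -/
theorem modelMr_covariance (r m c : ℕ) (X0 : Fin r → ℕ) (hr : 3 ≤ r) (hm : 1 ≤ m)
    (hc : 1 ≤ c) (hX0 : ∀ i, 1 ≤ X0 i) (hT0 : m ≤ totX r X0)
    (i j : Fin r) (hij : i ≠ j)
    (lam1 lam2 : ℝ)
    (hlam1 : lam1 = (-(1/2) + (m : ℝ) * c + (totX r X0 : ℝ) +
      (1/2) * Real.sqrt (1 + 4 * (m : ℝ) * c * (1 + (c : ℝ)))) / ((m : ℝ) * c))
    (hlam2 : lam2 = (-(1/2) + (m : ℝ) * c + (totX r X0 : ℝ) -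
      (1/2) * Real.sqrt (1 + 4 * (m : ℝ) * c * (1 + (c : ℝ)))) / ((m : ℝ) * c)) :
    ∀ n : ℕ, covMr r m c X0 n i j =
      (gchoose ((n : ℝ) - 1 + lam1) n * gchoose ((n : ℝ) - 1 + lam2) n) /
          (gchoose ((n : ℝ) - 1 + (totX r X0 : ℝ) / ((m : ℝ) * c)) n *
            gchoose ((n : ℝ) - 1 + ((totX r X0 : ℝ) - 1) / ((m : ℝ) * c)) n) *
          ((X0 i : ℝ) * (X0 j : ℝ)) -
        ((m : ℝ) * c) ^ 2 * ((n : ℝ) + (totX r X0 : ℝ) / ((m : ℝ) * c)) ^ 2 /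
            (totX r X0 : ℝ) ^ 2 * ((X0 i : ℝ) * (X0 j : ℝ)) := by
  intro n
  have h3T : 3 ≤ totX r X0 := by
    have hr' : r ≤ totX r X0 := by
      calc r = ∑ _l : Fin r, 1 := by simp
        _ ≤ ∑ l, X0 l := Finset.sum_le_sum (fun l _ => hX0 l)
        _ = totX r X0 := rfl
    omega
  have h2T : 2 ≤ totX r X0 := by omega
  have hT00 : (totX r X0 : ℝ) ≠ 0 := by
    have : (0:ℕ) < totX r X0 := by omega
    positivity
  have hm' : (0:ℝ) < m := by exact_mod_cast hm
  have hc' : (0:ℝ) < c := by exact_mod_cast hc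
  have hmc : ((m : ℝ) * c) ≠ 0 := by positivity
  have hTn : (urnTr r m c X0 n : ℝ) = (totX r X0 : ℝ) + (n : ℝ) * m * c := by
    simp only [urnTr]
    push_cast
    ring
  have hsq : ((m : ℝ) * c) ^ 2 * ((n : ℝ) + (totX r X0 : ℝ) / ((m : ℝ) * c)) ^ 2 /
        (totX r X0 : ℝ) ^ 2 * ((X0 i : ℝ) * (X0 j : ℝ))
      = ((X0 i : ℝ) * (urnTr r m c X0 n : ℝ) / (totX r X0 : ℝ)) *
          ((X0 j : ℝ) * (urnTr r m c X0 n : ℝ) / (totX r X0 : ℝ)) := by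
    rw [hTn]
    field_simp
    ring
  unfold covMr
  rw [urn_moment2 hm hT0 h2T hX0 i j hij n, urn_moment1 hm hT0 h2T n i,
    urn_moment1 hm hT0 h2T n j, urn_prod_gfac hm hc h3T lam1 lam2 hlam1 hlam2 n, hsq]
  ring
end

section
/- In model R, for every fixed ℓ ≥ 1 there exists a constant κ > 0 such that for all n ≥ ℓ, all integers j with cm ≤ j ≤ T_{ℓ−1}, and all integers k with 0 ≤ k < m(n+1), one has Σ_{i=0}^{m} P(W_{n+1} = j+ck | W_n = j+c(k−i)) ≤ 1 − 1/n + κ/n², where P(W_{n+1} = w + c·i | W_n = w) := C(m,i)·w^{i}·(T_n−w)^{m−i}/T_n^{m} for 0 ≤ i ≤ m. -/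
set_option maxHeartbeats 1000000
open Finset

lemma pascal_step (d : ℕ) (g : ℕ → ℝ) :
    ∑ i ∈ range (d + 2), (-1 : ℝ) ^ i * ((d+1).choose i : ℝ) * g i
      = ∑ i ∈ range (d + 1), (-1 : ℝ) ^ i * (d.choose i : ℝ) * (g i - g (i + 1)) := by
  have h0 : ∑ i ∈ range (d + 2), (-1 : ℝ) ^ i * ((d+1).choose i : ℝ) * g i
      = (∑ i ∈ range (d + 1), (-1 : ℝ) ^ (i+1) * ((d+1).choose (i+1) : ℝ) * g (i+1)) + g 0 := by
    rw [Finset.sum_range_succ']; simp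
  have h1 : ∀ i ∈ range (d+1), (-1 : ℝ) ^ (i+1) * ((d+1).choose (i+1) : ℝ) * g (i+1)
      = -((-1:ℝ)^i * (d.choose i : ℝ) * g (i+1)) + (-1:ℝ)^(i+1) * (d.choose (i+1) : ℝ) * g (i+1) := by
    intro i _
    rw [Nat.choose_succ_succ]
    push_cast
    ring
  have h2 : ∑ i ∈ range (d+1), (-1:ℝ)^(i+1) * (d.choose (i+1) : ℝ) * g (i+1)
      = (∑ i ∈ range (d+1), (-1:ℝ)^i * (d.choose i : ℝ) * g i) - g 0 := by
    have h3 := Finset.sum_range_succ' (fun i => (-1:ℝ)^i * (d.choose i : ℝ) * g i) (d+1)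
    rw [Finset.sum_range_succ] at h3
    simp only [Nat.choose_succ_self, Nat.cast_zero, mul_zero, zero_mul, add_zero,
      Nat.choose_zero_right, Nat.cast_one, pow_zero, one_mul, mul_one] at h3
    linarith [h3]
  rw [h0, Finset.sum_congr rfl h1, Finset.sum_add_distrib, h2]
  simp only [mul_sub]
  rw [Finset.sum_sub_distrib, Finset.sum_neg_distrib]
  ring

lemma alt_diff : ∀ d : ℕ, ∀ j ≤ d, ∑ i ∈ range (d+1), (-1:ℝ)^i * (d.choose i : ℝ) * (i:ℝ)^j
    = if j = d then (-1:ℝ)^d * (d.factorial : ℝ) else 0 := by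
  intro d
  induction d with
  | zero =>
    intro j hj
    interval_cases j
    simp
  | succ d ih =>
    intro j hj
    rw [show d + 1 + 1 = d + 2 from rfl, pascal_step d (fun i => (i:ℝ)^j)]
    have hexp : ∀ i ∈ range (d+1), (-1:ℝ)^i * (d.choose i : ℝ) * ((i:ℝ)^j - ((i:ℝ)+1)^j)
        = -∑ t ∈ range j, (j.choose t : ℝ) * ((-1:ℝ)^i * (d.choose i : ℝ) * (i:ℝ)^t) := by
      intro i _
      have h := add_pow (i:ℝ) 1 j
      rw [Finset.sum_range_succ] at h
      simp only [one_pow, mul_one, Nat.choose_self, Nat.cast_one] at h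
      have h2 : (i:ℝ)^j - ((i:ℝ)+1)^j = -∑ x ∈ range j, (i:ℝ)^x * (j.choose x : ℝ) := by
        rw [h]; ring
      rw [h2, mul_neg]
      congr 1
      rw [Finset.mul_sum]
      exact Finset.sum_congr rfl fun t _ => by ring
    push_cast
    rw [Finset.sum_congr rfl hexp, Finset.sum_neg_distrib, Finset.sum_comm]
    have hin : ∀ t ∈ range j, ∑ i ∈ range (d+1), (j.choose t : ℝ) * ((-1:ℝ)^i * (d.choose i : ℝ) * (i:ℝ)^t)
        = (j.choose t : ℝ) * (if t = d then (-1:ℝ)^d * (d.factorial : ℝ) else 0) := by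
      intro t ht
      have ht' := Finset.mem_range.1 ht
      rw [← Finset.mul_sum, ih t (by omega)]
    rw [Finset.sum_congr rfl hin]
    by_cases hjd : j = d + 1
    · subst hjd
      rw [Finset.sum_eq_single d]
      · rw [if_pos rfl, Nat.choose_succ_self_right, Nat.factorial_succ]
        push_cast
        ring_nf
        simp
      · intro t ht htne; simp [htne]
      · intro h; simp at h
    · have hz : ∀ t ∈ range j, (j.choose t : ℝ) * (if t = d then (-1:ℝ)^d * (d.factorial : ℝ) else 0) = 0 := by
        intro t ht
        simp only [mem_range] at ht
        rw [if_neg (by omega)]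
        simp
      rw [Finset.sum_congr rfl hz, Finset.sum_const_zero, if_neg hjd]
      simp

lemma alt_linear (d : ℕ) (c w : ℝ) :
    ∑ i ∈ range (d+1), (-1:ℝ)^i * (d.choose i : ℝ) * (w - c * i)^d
      = c^d * (d.factorial : ℝ) := by
  have key : ∀ i ∈ range (d+1), (-1:ℝ)^i * (d.choose i : ℝ) * (w - c * i)^d
      = ∑ t ∈ range (d+1), ((d.choose t : ℝ) * w^(d-t) * (-c)^t) * ((-1:ℝ)^i * (d.choose i : ℝ) * (i:ℝ)^t) := by
    intro i _
    have h := add_pow ((-c) * (i:ℝ)) w d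
    rw [show w - c * (i:ℝ) = (-c) * (i:ℝ) + w by ring, h, Finset.mul_sum]
    exact Finset.sum_congr rfl fun t _ => by rw [mul_pow]; ring
  rw [Finset.sum_congr rfl key, Finset.sum_comm]
  have hin : ∀ t ∈ range (d+1), ∑ i ∈ range (d+1), ((d.choose t : ℝ) * w^(d-t) * (-c)^t) * ((-1:ℝ)^i * (d.choose i : ℝ) * (i:ℝ)^t)
      = ((d.choose t : ℝ) * w^(d-t) * (-c)^t) * (if t = d then (-1:ℝ)^d * (d.factorial : ℝ) else 0) := by
    intro t ht
    rw [← Finset.mul_sum, alt_diff d t (by simpa using Nat.lt_succ_iff.1 (Finset.mem_range.1 ht))]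
  rw [Finset.sum_congr rfl hin, Finset.sum_eq_single d]
  · rw [if_pos rfl, Nat.choose_self, Nat.sub_self]
    have : (-c)^d * ((-1:ℝ)^d) = c^d := by
      rw [← mul_pow]; norm_num
    push_cast
    calc (1:ℝ) * w^0 * (-c)^d * ((-1:ℝ)^d * (d.factorial:ℝ)) = ((-c)^d * (-1:ℝ)^d) * (d.factorial:ℝ) := by ring
      _ = c^d * (d.factorial:ℝ) := by rw [this]
  · intro t ht htne; simp [htne]
  · intro h; simp at h

lemma choose_helper {m i s : ℕ} (h : i + s ≤ m) :
    m.choose i * (m - i).choose s = m.choose s * (m - s).choose i := by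
  have h1 := Nat.choose_mul (n := m) (k := i + s) (show i ≤ i + s by omega)
  have h2 := Nat.choose_mul (n := m) (k := i + s) (show s ≤ i + s by omega)
  rw [show i + s - i = s by omega] at h1
  rw [show i + s - s = i by omega] at h2
  have h3 : (i+s).choose i = (i+s).choose s := by
    rw [← Nat.choose_symm (show s ≤ i + s by omega), show i + s - s = i by omega]
  rw [← h1, ← h2, h3]

lemma abel_sum (m : ℕ) (c w T : ℝ) :
    ∑ i ∈ range (m+1), (m.choose i : ℝ) * (w - c*(i:ℝ))^i * (T - (w - c*(i:ℝ)))^(m - i)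
      = ∑ s ∈ range (m+1), (-1:ℝ)^(m-s) * (m.choose s : ℝ) * ((m-s).factorial : ℝ) * c^(m-s) * T^s := by
  set F : ℕ → ℕ → ℝ := fun i s => (m.choose i : ℝ) * (((m-i).choose s : ℝ)) * (-1:ℝ)^(m-i-s) * (w - c*(i:ℝ))^(m-s) * T^s with hF
  have step1 : ∀ i ∈ range (m+1), (m.choose i : ℝ) * (w - c*(i:ℝ))^i * (T - (w - c*(i:ℝ)))^(m - i)
      = ∑ s ∈ range (m+1), F i s := by
    intro i hi
    have hi' : i ≤ m := Nat.lt_succ_iff.1 (mem_range.1 hi)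
    have hexp : (T - (w - c*(i:ℝ)))^(m - i)
        = ∑ s ∈ range (m-i+1), T^s * (-(w - c*(i:ℝ)))^(m-i-s) * (((m-i).choose s : ℝ)) := by
      rw [show T - (w - c*(i:ℝ)) = T + (-(w - c*(i:ℝ))) by ring]
      exact add_pow T (-(w - c*(i:ℝ))) (m-i)
    have hshrink : ∑ s ∈ range (m+1), F i s = ∑ s ∈ range (m-i+1), F i s := by
      refine (Finset.sum_subset (Finset.range_subset_range.2 (by omega)) ?_).symm
      intro s hs hns
      have h1 : m - i < s := by
        simp only [mem_range] at hs hns; omega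
      have h2 : ((m-i).choose s : ℝ) = 0 := by
        rw [Nat.choose_eq_zero_of_lt h1]; simp
      simp [hF, h2]
    rw [hexp, Finset.mul_sum, hshrink]
    refine Finset.sum_congr rfl fun s hs => ?_
    have hs' : s ≤ m - i := Nat.lt_succ_iff.1 (mem_range.1 hs)
    have e1 : (-(w - c*(i:ℝ)))^(m-i-s) = (-1:ℝ)^(m-i-s) * (w - c*(i:ℝ))^(m-i-s) := by
      rw [neg_pow]
    have e2 : (w - c*(i:ℝ))^i * (w - c*(i:ℝ))^(m-i-s) = (w - c*(i:ℝ))^(m-s) := by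
      rw [← pow_add]; congr 1; omega
    rw [hF]
    simp only []
    rw [e1, ← e2]
    ring
  rw [Finset.sum_congr rfl step1, Finset.sum_comm]
  refine Finset.sum_congr rfl fun s hs => ?_
  have hs' : s ≤ m := Nat.lt_succ_iff.1 (mem_range.1 hs)
  have hshrink2 : ∑ i ∈ range (m+1), F i s = ∑ i ∈ range (m-s+1), F i s := by
    refine (Finset.sum_subset (Finset.range_subset_range.2 (by omega)) ?_).symm
    intro i hi hni
    have h1 : m - i < s := by
      simp only [mem_range] at hi hni; omega
    have h2 : ((m-i).choose s : ℝ) = 0 := by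
      rw [Nat.choose_eq_zero_of_lt h1]; simp
    simp [hF, h2]
  have hterm : ∀ i ∈ range (m-s+1), F i s
      = ((-1:ℝ)^(m-s) * (m.choose s : ℝ) * T^s) * ((-1:ℝ)^i * (((m-s).choose i : ℝ)) * (w - c*(i:ℝ))^(m-s)) := by
    intro i hi
    have hi' : i ≤ m - s := Nat.lt_succ_iff.1 (mem_range.1 hi)
    have hch : (m.choose i : ℝ) * (((m-i).choose s : ℝ)) = (m.choose s : ℝ) * (((m-s).choose i : ℝ)) := by
      have := choose_helper (show i + s ≤ m by omega)
      exact_mod_cast congrArg (Nat.cast : ℕ → ℝ) this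
    have hsign : (-1:ℝ)^(m-s) * (-1:ℝ)^i = (-1:ℝ)^(m-i-s) := by
      rw [← pow_add, show m - s + i = (m-i-s) + 2*i from by omega, pow_add, pow_mul]
      norm_num
    rw [hF]
    simp only []
    rw [← hsign]
    calc (m.choose i : ℝ) * (((m-i).choose s : ℝ)) * ((-1:ℝ)^(m-s) * (-1:ℝ)^i) * (w - c*(i:ℝ))^(m-s) * T^s
        = ((m.choose i : ℝ) * (((m-i).choose s : ℝ))) * ((-1:ℝ)^(m-s) * (-1:ℝ)^i * (w - c*(i:ℝ))^(m-s) * T^s) := by ring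
      _ = ((m.choose s : ℝ) * (((m-s).choose i : ℝ))) * ((-1:ℝ)^(m-s) * (-1:ℝ)^i * (w - c*(i:ℝ))^(m-s) * T^s) := by rw [hch]
      _ = ((-1:ℝ)^(m-s) * (m.choose s : ℝ) * T^s) * ((-1:ℝ)^i * (((m-s).choose i : ℝ)) * (w - c*(i:ℝ))^(m-s)) := by ring
  rw [hshrink2, Finset.sum_congr rfl hterm, ← Finset.mul_sum, alt_linear (m-s) c w]
  ring

/-- Total number of balls after `n` draws: `T_n = W_0 + B_0 + n·m·c`. -/
def urnT (W0 B0 m c n : ℕ) : ℕ := W0 + B0 + n * m * c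

/-- In model `R`, for every fixed `ℓ ≥ 1` there is a constant `κ > 0` such that for all
`n ≥ ℓ`, all `j` with `cm ≤ j ≤ T_{ℓ−1}` and all `k < m(n+1)`,
`Σ_{i=0}^{m} P(W_{n+1}=j+ck | W_n=j+c(k−i)) ≤ 1 − 1/n + κ/n²`, where
`P(W_{n+1}=w+ci | W_n=w) = C(m,i)·w^i·(T_n−w)^{m−i}/T_n^m`. -/
theorem modelR_transition_sum_bound (W0 B0 m c : ℕ) (hm : 1 ≤ m) (hc : 1 ≤ c)
    (hW0 : 1 ≤ W0) (hB0 : 1 ≤ B0) (hT0 : m ≤ W0 + B0)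
    (ℓ : ℕ) (hℓ : 1 ≤ ℓ) :
    ∃ κ : ℝ, 0 < κ ∧ ∀ n : ℕ, ℓ ≤ n → ∀ j k : ℕ,
      c * m ≤ j → j ≤ urnT W0 B0 m c (ℓ - 1) → k < m * (n + 1) →
      ∑ i ∈ Finset.range (m + 1),
          (Nat.choose m i : ℝ) * ((j : ℝ) + c * ((k : ℝ) - i)) ^ i *
            ((urnT W0 B0 m c n : ℝ) - ((j : ℝ) + c * ((k : ℝ) - i))) ^ (m - i) /
            (urnT W0 B0 m c n : ℝ) ^ m ≤
        1 - 1 / (n : ℝ) + κ / (n : ℝ) ^ 2 := by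
  obtain ⟨p, rfl⟩ : ∃ p, m = p + 1 := ⟨m - 1, by omega⟩
  refine ⟨(W0 + B0 : ℝ) + ((p:ℝ)+1) * (((p+1).factorial : ℝ)) * (c:ℝ)^(p+1), by positivity, ?_⟩
  intro n hn j k _ _ _
  set T : ℝ := (urnT W0 B0 (p+1) c n : ℝ) with hT
  have hTval : T = (W0 : ℝ) + (B0 : ℝ) + (n:ℝ) * ((p:ℝ)+1) * (c:ℝ) := by
    rw [hT]; unfold urnT; push_cast; ring
  have hn1 : (1:ℝ) ≤ (n:ℝ) := by exact_mod_cast le_trans hℓ hn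
  have hnpos : (0:ℝ) < (n:ℝ) := by linarith
  have hc1 : (1:ℝ) ≤ (c:ℝ) := by exact_mod_cast hc
  have ht0 : (2:ℝ) ≤ (W0:ℝ) + (B0:ℝ) := by
    have : (1:ℝ) ≤ (W0:ℝ) := by exact_mod_cast hW0
    have : (1:ℝ) ≤ (B0:ℝ) := by exact_mod_cast hB0
    linarith
  have hpc : (1:ℝ) ≤ ((p:ℝ)+1)*(c:ℝ) := by nlinarith [(p.cast_nonneg : (0:ℝ) ≤ (p:ℝ))]
  have hTn : (n:ℝ) ≤ T := by
    rw [hTval]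
    nlinarith [mul_le_mul_of_nonneg_left hpc (le_of_lt hnpos)]
  have hT1 : (1:ℝ) ≤ T := le_trans hn1 hTn
  have hTpos : (0:ℝ) < T := by linarith
  -- middle bound
  have hmid : (1/(n:ℝ) - ((W0:ℝ)+(B0:ℝ))/(n:ℝ)^2) * T^(p+1) ≤ ((p:ℝ)+1) * (c:ℝ) * T^p := by
    have hsc : (1/(n:ℝ) - ((W0:ℝ)+(B0:ℝ))/(n:ℝ)^2) * T ≤ ((p:ℝ)+1) * (c:ℝ) := by
      rw [div_sub_div _ _ (by positivity : (n:ℝ) ≠ 0) (by positivity : (n:ℝ)^2 ≠ 0)]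
      rw [div_mul_eq_mul_div, div_le_iff₀ (by positivity : (0:ℝ) < (n:ℝ) * (n:ℝ)^2)]
      rw [hTval]
      have hkey : (n:ℝ)^2 * ((W0:ℝ)+(B0:ℝ)) * 1 ≤ (n:ℝ)^2 * ((W0:ℝ)+(B0:ℝ)) * (((p:ℝ)+1)*(c:ℝ)) :=
        mul_le_mul_of_nonneg_left hpc (by positivity)
      nlinarith [hkey, mul_nonneg (le_of_lt hnpos) (mul_nonneg (by linarith : (0:ℝ) ≤ (W0:ℝ)+(B0:ℝ)) (by linarith : (0:ℝ) ≤ (W0:ℝ)+(B0:ℝ)))]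
    have hTp : T^(p+1) = T^p * T := by rw [pow_succ]
    rw [hTp]
    have hTppos : (0:ℝ) ≤ T^p := by positivity
    calc (1/(n:ℝ) - ((W0:ℝ)+(B0:ℝ))/(n:ℝ)^2) * (T^p * T)
        = ((1/(n:ℝ) - ((W0:ℝ)+(B0:ℝ))/(n:ℝ)^2) * T) * T^p := by ring
      _ ≤ (((p:ℝ)+1) * (c:ℝ)) * T^p := mul_le_mul_of_nonneg_right hsc hTppos
      _ = ((p:ℝ)+1) * (c:ℝ) * T^p := by ring
  set w : ℝ := (j:ℝ) + (c:ℝ)*(k:ℝ) with hw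
  have hbase : ∀ i : ℕ, (j:ℝ) + (c:ℝ)*((k:ℝ) - (i:ℝ)) = w - (c:ℝ)*(i:ℝ) := by
    intro i; rw [hw]; ring
  have hsum : ∑ i ∈ Finset.range (p + 1 + 1),
          ((p+1).choose i : ℝ) * ((j : ℝ) + c * ((k : ℝ) - i)) ^ i *
            (T - ((j : ℝ) + c * ((k : ℝ) - i))) ^ (p + 1 - i) / T ^ (p+1)
      = (∑ s ∈ range (p+1+1), (-1:ℝ)^(p+1-s) * ((p+1).choose s : ℝ) * ((p+1-s).factorial : ℝ) * (c:ℝ)^(p+1-s) * T^s) / T^(p+1) := by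
    rw [← Finset.sum_div]
    congr 1
    rw [← abel_sum (p+1) (c:ℝ) w T]
    exact Finset.sum_congr rfl fun i _ => by rw [hbase i]
  rw [hsum, div_le_iff₀ (by positivity : (0:ℝ) < T^(p+1))]
  rw [Finset.sum_range_succ, Finset.sum_range_succ]
  have hf1 : (-1:ℝ)^(p+1-(p+1)) * ((p+1).choose (p+1) : ℝ) * ((p+1-(p+1)).factorial : ℝ) * (c:ℝ)^(p+1-(p+1)) * T^(p+1) = T^(p+1) := by
    simp
  have hf2 : (-1:ℝ)^(p+1-p) * ((p+1).choose p : ℝ) * ((p+1-p).factorial : ℝ) * (c:ℝ)^(p+1-p) * T^p = -(((p:ℝ)+1) * (c:ℝ) * T^p) := by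
    rw [show p + 1 - p = 1 from by omega, Nat.choose_succ_self_right, Nat.factorial_one]
    push_cast
    ring
  rw [hf1, hf2]
  -- tail bound
  have htail : ∑ s ∈ range p, (-1:ℝ)^(p+1-s) * ((p+1).choose s : ℝ) * ((p+1-s).factorial : ℝ) * (c:ℝ)^(p+1-s) * T^s
      ≤ (p:ℝ) * (((p+1).factorial : ℝ) * (c:ℝ)^(p+1) * T^(p+1) / (n:ℝ)^2) := by
    have hb : ∀ s ∈ range p, (-1:ℝ)^(p+1-s) * ((p+1).choose s : ℝ) * ((p+1-s).factorial : ℝ) * (c:ℝ)^(p+1-s) * T^s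
        ≤ ((p+1).factorial : ℝ) * (c:ℝ)^(p+1) * T^(p+1) / (n:ℝ)^2 := by
      intro s hs
      have hs' : s < p := mem_range.1 hs
      have e1 : (-1:ℝ)^(p+1-s) * ((p+1).choose s : ℝ) * ((p+1-s).factorial : ℝ) * (c:ℝ)^(p+1-s) * T^s
          ≤ ((p+1).choose s : ℝ) * ((p+1-s).factorial : ℝ) * (c:ℝ)^(p+1-s) * T^s := by
        have hrest : (0:ℝ) ≤ ((p+1).choose s : ℝ) * ((p+1-s).factorial : ℝ) * (c:ℝ)^(p+1-s) * T^s := by positivity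
        have hone : (-1:ℝ)^(p+1-s) ≤ 1 := by
          rcases Nat.even_or_odd (p+1-s) with h | h
          · rw [h.neg_one_pow]
          · rw [h.neg_one_pow]; norm_num
        nlinarith [mul_nonneg (by linarith : (0:ℝ) ≤ 1 - (-1:ℝ)^(p+1-s)) hrest]
      have e2 : ((p+1).choose s : ℝ) * ((p+1-s).factorial : ℝ) ≤ ((p+1).factorial : ℝ) := by
        have hnat : (p+1).choose s * (p+1-s).factorial ≤ (p+1).factorial := by
          have h := Nat.choose_mul_factorial_mul_factorial (show s ≤ p+1 by omega)
          nlinarith [Nat.factorial_pos s]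
        exact_mod_cast hnat
      have e3 : (c:ℝ)^(p+1-s) ≤ (c:ℝ)^(p+1) := pow_le_pow_right₀ (by linarith) (by omega)
      have e4 : T^s * (n:ℝ)^2 ≤ T^(p+1) := by
        have : T^(p+1) = T^s * T^(p+1-s) := by rw [← pow_add]; congr 1; omega
        rw [this]
        have h5 : (n:ℝ)^2 ≤ T^2 := by nlinarith
        have h6 : T^2 ≤ T^(p+1-s) := pow_le_pow_right₀ hT1 (by omega)
        have h7 : (0:ℝ) ≤ T^s := by positivity
        nlinarith
      calc (-1:ℝ)^(p+1-s) * ((p+1).choose s : ℝ) * ((p+1-s).factorial : ℝ) * (c:ℝ)^(p+1-s) * T^s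
          ≤ ((p+1).choose s : ℝ) * ((p+1-s).factorial : ℝ) * (c:ℝ)^(p+1-s) * T^s := e1
        _ = (((p+1).choose s : ℝ) * ((p+1-s).factorial : ℝ)) * ((c:ℝ)^(p+1-s) * T^s) := by ring
        _ ≤ ((p+1).factorial : ℝ) * ((c:ℝ)^(p+1-s) * T^s) := by
            refine mul_le_mul_of_nonneg_right e2 ?_
            have hTs : (0:ℝ) ≤ T^s := pow_nonneg (le_of_lt hTpos) s
            positivity
        _ = (((p+1).factorial : ℝ) * T^s) * (c:ℝ)^(p+1-s) := by ring
        _ ≤ (((p+1).factorial : ℝ) * T^s) * (c:ℝ)^(p+1) := by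
            refine mul_le_mul_of_nonneg_left e3 ?_
            have hTs : (0:ℝ) ≤ T^s := pow_nonneg (le_of_lt hTpos) s
            positivity
        _ = ((p+1).factorial : ℝ) * (c:ℝ)^(p+1) * T^s := by ring
        _ ≤ ((p+1).factorial : ℝ) * (c:ℝ)^(p+1) * T^(p+1) / (n:ℝ)^2 := by
            rw [le_div_iff₀ (by positivity : (0:ℝ) < (n:ℝ)^2)]
            have h9 : (0:ℝ) ≤ ((p+1).factorial : ℝ) * (c:ℝ)^(p+1) := by positivity
            nlinarith [e4]
    calc ∑ s ∈ range p, (-1:ℝ)^(p+1-s) * ((p+1).choose s : ℝ) * ((p+1-s).factorial : ℝ) * (c:ℝ)^(p+1-s) * T^s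
        ≤ ∑ s ∈ range p, ((p+1).factorial : ℝ) * (c:ℝ)^(p+1) * T^(p+1) / (n:ℝ)^2 := Finset.sum_le_sum hb
      _ = (p:ℝ) * (((p+1).factorial : ℝ) * (c:ℝ)^(p+1) * T^(p+1) / (n:ℝ)^2) := by
          rw [Finset.sum_const, Finset.card_range, nsmul_eq_mul]
  -- final
  have hX : (0:ℝ) ≤ ((p+1).factorial : ℝ) * (c:ℝ)^(p+1) * T^(p+1) / (n:ℝ)^2 := by positivity
  have hstep : (p:ℝ) * (((p+1).factorial : ℝ) * (c:ℝ)^(p+1) * T^(p+1) / (n:ℝ)^2)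
      ≤ (((p:ℝ)+1) * (((p+1).factorial : ℝ)) * (c:ℝ)^(p+1)) / (n:ℝ)^2 * T^(p+1) := by
    have : (((p:ℝ)+1) * (((p+1).factorial : ℝ)) * (c:ℝ)^(p+1)) / (n:ℝ)^2 * T^(p+1)
        = ((p:ℝ)+1) * (((p+1).factorial : ℝ) * (c:ℝ)^(p+1) * T^(p+1) / (n:ℝ)^2) := by ring
    rw [this]
    exact mul_le_mul_of_nonneg_right (by linarith : (p:ℝ) ≤ (p:ℝ)+1) hX
  have hrhs : (1 - 1 / (n : ℝ) + ((W0 + B0 : ℝ) + ((p:ℝ)+1) * (((p+1).factorial : ℝ)) * (c:ℝ)^(p+1)) / (n : ℝ) ^ 2) * T^(p+1)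
      = T^(p+1) - (1/(n:ℝ) - ((W0:ℝ)+(B0:ℝ))/(n:ℝ)^2) * T^(p+1)
        + (((p:ℝ)+1) * (((p+1).factorial : ℝ)) * (c:ℝ)^(p+1)) / (n:ℝ)^2 * T^(p+1) := by
    push_cast
    ring
  rw [hrhs]
  linarith [htail, hmid, hstep]
end
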